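/- Let t ≥ 1 and (a_1,b_1),...,(a_t,b_t) be t pairs of positive integers. Then there exists a set A ⊆ ℕ with asymptotic density d(A) = ∏_{i=1}^t 1/(a_i + b_i) such that the t+1 sets A, Γ_{a_1,b_1}(A), Γ_{a_1,b_1}∘Γ_{a_2,b_2}(A), ..., ◯_{j=1}^t Γ_{a_j,b_j}(A) are pairwise distinct. -/

import Mathlib

open scoped Classical

/-- The linear operation `Γ_{a,b}(X) = aX + bX = {a x + b x' : x, x' ∈ X}`. -/
def Gamma (a b : ℤ) (X : Set ℤ) : Set ℤ :=
  {z | ∃ x ∈ X, ∃ y ∈ X, z = a * x + b * y}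

/-- The `s`-fold composition `◯_{j=1}^s Γ_{a_j,b_j}(X)` (0-indexed). -/
def iterComp (a b : ℕ → ℤ) : ℕ → Set ℤ → Set ℤ
  | 0, X => X
  | s + 1, X => Gamma (a s) (b s) (iterComp a b s X)

theorem exists_unstable_set (t : ℕ) (ht : 1 ≤ t) (a b : ℕ → ℤ)
    (hab : ∀ i < t, 0 < a i ∧ 0 < b i) :
    ∃ A : Set ℤ, (∀ x ∈ A, 0 ≤ x) ∧
      Filter.Tendsto
        (fun n : ℕ => (((Finset.Icc 1 n).filter fun m => (m : ℤ) ∈ A).card : ℝ) / n)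
        Filter.atTop
        (nhds (∏ i ∈ Finset.range t, (1 / ((a i + b i : ℤ) : ℝ)))) ∧
      ∀ s₁ ≤ t, ∀ s₂ ≤ t, s₁ ≠ s₂ → iterComp a b s₁ A ≠ iterComp a b s₂ A := by
  classical
  have hab1 : ∀ i < t, 1 ≤ a i + b i := fun i hi => by
    have := hab i hi; omega
  set q : ℕ := ∏ i ∈ Finset.range t, (a i + b i).toNat with hqdef
  have hq : (q : ℤ) = ∏ i ∈ Finset.range t, (a i + b i) := by
    rw [hqdef]
    push_cast
    refine Finset.prod_congr rfl fun i hi => ?_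
    rw [Int.toNat_of_nonneg (by linarith [hab1 i (Finset.mem_range.mp hi)])]
  have hq1 : 1 ≤ q := Finset.one_le_prod' fun i hi => by
    have := hab1 i (Finset.mem_range.mp hi); omega
  set A : Set ℤ := {z | ∃ x : ℕ, z = (q : ℤ) * x + 1} with hAdef
  set M : ℕ → ℤ := fun s => ∏ j ∈ Finset.range s, (a j + b j) with hMdef
  have hM1 : ∀ s ≤ t, 1 ≤ M s := by
    intro s hs
    show (1:ℤ) ≤ ∏ j ∈ Finset.range s, (a j + b j)
    have := Finset.prod_le_prod (f := fun _ : ℕ => (1:ℤ))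
      (g := fun j => a j + b j) (s := Finset.range s)
      (fun j _ => zero_le_one)
      (fun j hj => hab1 j (lt_of_lt_of_le (Finset.mem_range.mp hj) hs))
    simpa using this
  have key : ∀ s ≤ t, M s ∈ iterComp a b s A ∧ ∀ z ∈ iterComp a b s A, M s ≤ z := by
    intro s
    induction s with
    | zero =>
      intro _
      constructor
      · exact ⟨0, by simp [hMdef]⟩
      · rintro z ⟨x, rfl⟩
        have : (0:ℤ) ≤ (q:ℤ) * x := by positivity
        simp only [hMdef, Finset.range_zero, Finset.prod_empty]
        linarith
    | succ s ih =>
      intro hs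
      obtain ⟨hmem, hlb⟩ := ih (by omega)
      obtain ⟨has, hbs⟩ := hab s (by omega)
      have hMs : (1:ℤ) ≤ M s := hM1 s (by omega)
      have hMsucc : M (s + 1) = a s * M s + b s * M s := by
        simp only [hMdef, Finset.prod_range_succ]; ring
      constructor
      · exact ⟨M s, hmem, M s, hmem, hMsucc⟩
      · rintro z ⟨x, hx, y, hy, rfl⟩
        have h1 := hlb x hx
        have h2 := hlb y hy
        rw [hMsucc]
        have hax : a s * M s ≤ a s * x := mul_le_mul_of_nonneg_left h1 (le_of_lt has)
        have hby : b s * M s ≤ b s * y := mul_le_mul_of_nonneg_left h2 (le_of_lt hbs)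
        linarith
  have hmono : ∀ s < t, M s < M (s + 1) := by
    intro s hs
    have hMs : (1:ℤ) ≤ M s := hM1 s (by omega)
    obtain ⟨has, hbs⟩ := hab s hs
    have : M (s + 1) = M s * (a s + b s) := by
      simp only [hMdef, Finset.prod_range_succ]
    rw [this]
    nlinarith
  have hlt : ∀ s₂ ≤ t, ∀ s₁ < s₂, M s₁ < M s₂ := by
    intro s₂
    induction s₂ with
    | zero => omega
    | succ s ih =>
      intro hs s₁ h1
      rcases Nat.lt_succ_iff_lt_or_eq.mp h1 with h | h
      · exact (ih (by omega) _ h).trans (hmono s (by omega))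
      · subst h; exact hmono s₁ (by omega)
  refine ⟨A, ?_, ?_, ?_⟩
  · rintro z ⟨x, rfl⟩
    positivity
  · -- density
    have hinj : Function.Injective (fun x : ℕ => ((q * x + 1 : ℕ) : ℤ)) := by
      intro x y h
      have h2 : ((q * x + 1 : ℕ) : ℤ) = ((q * y + 1 : ℕ) : ℤ) := h
      have h' : q * x + 1 = q * y + 1 := by exact_mod_cast h2
      exact Nat.eq_of_mul_eq_mul_left (show 0 < q by omega) (Nat.add_right_cancel h')
    have hcard : ∀ n : ℕ, 1 ≤ n →
        (((Finset.Icc 1 n).filter fun m => (m : ℤ) ∈ A).card) = (n - 1) / q + 1 := by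
      intro n hn
      have himg : ((Finset.Icc 1 n).filter fun m => (m : ℤ) ∈ A) =
          (Finset.range ((n - 1) / q + 1)).image (fun x : ℕ => ((q * x + 1 : ℕ) : ℤ)) := by
        ext m
        simp only [Finset.pure_def, Finset.bind_def, Finset.sup_singleton_apply,
          Finset.mem_image, Finset.mem_filter, Finset.mem_Icc, Finset.mem_range,
          hAdef, Set.mem_setOf_eq]
        constructor
        · rintro ⟨⟨u, ⟨hu1, hun⟩, rfl⟩, x, hx⟩
          have hmx : u = q * x + 1 := by exact_mod_cast hx
          have hxle : x ≤ (n - 1) / q :=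
            (Nat.le_div_iff_mul_le (by omega)).mpr (by rw [Nat.mul_comm]; omega)
          exact ⟨x, by omega, by exact_mod_cast hmx.symm⟩
        · rintro ⟨x, hxk, rfl⟩
          have hxle : x ≤ (n - 1) / q := by omega
          have hmul : q * x ≤ q * ((n - 1) / q) := Nat.mul_le_mul_left q hxle
          have hdm : q * ((n - 1) / q) ≤ n - 1 := Nat.mul_div_le _ _
          exact ⟨⟨q * x + 1, ⟨by omega, by omega⟩, rfl⟩, x, by push_cast; ring⟩
      rw [himg, Finset.card_image_of_injective _ hinj, Finset.card_range]
    have hprodeq : (∏ i ∈ Finset.range t, (1 / ((a i + b i : ℤ) : ℝ))) = 1 / (q : ℝ) := by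
      rw [Finset.prod_div_distrib, Finset.prod_const_one]
      congr 1
      rw [← Int.cast_prod, ← hq]
      norm_cast
    rw [hprodeq]
    have hqR : (0:ℝ) < (q:ℝ) := by exact_mod_cast hq1
    have hlim : Filter.Tendsto (fun n : ℕ => (((n - 1) / q + 1 : ℕ) : ℝ) / n)
        Filter.atTop (nhds (1 / (q:ℝ))) := by
      apply tendsto_of_tendsto_of_tendsto_of_le_of_le'
        (g := fun _ : ℕ => 1 / (q:ℝ)) (h := fun n : ℕ => 1 / (q:ℝ) + 1 / (n:ℝ))
      · exact tendsto_const_nhds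
      · have : Filter.Tendsto (fun n : ℕ => 1 / (q:ℝ) + 1 / (n:ℝ)) Filter.atTop
            (nhds (1 / (q:ℝ) + 0)) :=
          tendsto_const_nhds.add tendsto_one_div_atTop_nhds_zero_nat
        simpa using this
      · filter_upwards [Filter.eventually_ge_atTop 1] with n hn
        have hnR : (0:ℝ) < (n:ℝ) := by exact_mod_cast hn
        set k : ℕ := (n - 1) / q + 1 with hk
        have hnk : n ≤ k * q := by
          have : (n - 1) / q < k := by omega
          have := (Nat.div_lt_iff_lt_mul (show 0 < q by omega)).mp this
          omega
        have hnkR : (n:ℝ) ≤ (k:ℝ) * q := by exact_mod_cast hnk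
        rw [div_le_div_iff₀ hqR hnR]
        linarith
      · filter_upwards [Filter.eventually_ge_atTop 1] with n hn
        have hnR : (0:ℝ) < (n:ℝ) := by exact_mod_cast hn
        have h1 : (((n - 1) / q : ℕ) : ℝ) ≤ ((n - 1 : ℕ) : ℝ) / (q:ℝ) := Nat.cast_div_le
        have h2 : ((n - 1 : ℕ) : ℝ) ≤ (n:ℝ) := by
          have : (n - 1 : ℕ) ≤ n := by omega
          exact_mod_cast this
        have h3 : (((n - 1) / q + 1 : ℕ) : ℝ) ≤ (n:ℝ) / (q:ℝ) + 1 := by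
          have hcast : (((n - 1) / q + 1 : ℕ) : ℝ) = (((n - 1) / q : ℕ) : ℝ) + 1 := by
            push_cast; ring
          rw [hcast]
          have h4 : ((n - 1 : ℕ) : ℝ) / (q:ℝ) ≤ (n:ℝ) / (q:ℝ) := by gcongr
          linarith
        calc (((n - 1) / q + 1 : ℕ) : ℝ) / n ≤ ((n:ℝ) / (q:ℝ) + 1) / n := by gcongr
          _ = 1 / (q:ℝ) + 1 / (n:ℝ) := by field_simp
    exact hlim.congr' (by
      filter_upwards [Filter.eventually_ge_atTop 1] with n hn
      rw [hcard n hn])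
  · intro s₁ h1 s₂ h2 hne heq
    have main : ∀ u v : ℕ, u ≤ t → v ≤ t → u < v →
        iterComp a b u A = iterComp a b v A → False := by
      intro u v hu hv huv he
      have h1 := (key u hu).1
      rw [he] at h1
      have := (key v hv).2 _ h1
      have := hlt v hv u huv
      linarith
    rcases lt_or_gt_of_ne hne with h | h
    · exact main s₁ s₂ h1 h2 h heq
    · exact main s₂ s₁ h2 h1 h heq.symm
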